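/- arXiv:1806.07262 — 6 statements merged into one kernel-verified Lean document; each statement's English description precedes it below -/
import Mathlib

section
/- Let φmin(δ) denote, for δ > 0, the unique solution in (0, π/3) of 1 + δ + F(φ) = 0. For every δ > 0 such a solution exists and is unique, 1 + δ + F(φ) > 0 for all φ ∈ (φmin(δ), π], and there exist constants C > 0 and δ₀ ∈ (0,1) such that for all δ ∈ (0, δ₀) the integral I(δ) = ∫_{φmin(δ)}^{π} (1 + δ + F(φ))^{-1/2} dφ satisfies |I(δ) − √(6/7)·ln(1/δ)| ≤ C. (This is the asymptotic expansion of the rescaled period of the horseshoe orbit of energy shift δ: the semi-fast frequency satisfies ν_δ = 2π/T_δ with T_δ = (2/(υ₀√(εAB)))·I(δ), hence ν_δ ∼ υ₀√ε·K/|ln δ| with K = √(7π²AB/6).) -/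
open Real MeasureTheory

/-- The normalized potential of the reduced semi-fast co-orbital mechanical system. -/
noncomputable def F (φ : ℝ) : ℝ :=
  (2/3) * (Real.cos φ - (2 - 2 * Real.cos φ) ^ (-(1:ℝ)/2))

namespace HS

lemma cos_lt_one' {φ : ℝ} (h1 : 0 < φ) (h2 : φ ≤ π) : Real.cos φ < 1 := by
  have := Real.strictAntiOn_cos (Set.left_mem_Icc.mpr Real.pi_pos.le) ⟨h1.le, h2⟩ h1
  simpa using this

lemma base_pos {φ : ℝ} (h1 : 0 < φ) (h2 : φ ≤ π) : 0 < 2 - 2 * Real.cos φ := by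
  nlinarith [cos_lt_one' h1 h2]

lemma rpow_neg_half_eq {x : ℝ} (hx : 0 < x) : x ^ (-(1:ℝ)/2) = (Real.sqrt x)⁻¹ := by
  rw [Real.sqrt_eq_rpow, ← Real.rpow_neg hx.le]
  norm_num

lemma one_add_F {φ : ℝ} (h : 0 < 2 - 2 * Real.cos φ) :
    1 + F φ = (2 - Real.sqrt (2 - 2 * Real.cos φ)) *
      ((Real.sqrt (2 - 2 * Real.cos φ)) ^ 2 + 2 * Real.sqrt (2 - 2 * Real.cos φ) - 1) /
      (3 * Real.sqrt (2 - 2 * Real.cos φ)) := by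
  set v := Real.sqrt (2 - 2 * Real.cos φ) with hv
  have hv0 : 0 < v := Real.sqrt_pos.mpr h
  have hv2 : v ^ 2 = 2 - 2 * Real.cos φ := Real.sq_sqrt h.le
  have hcos : Real.cos φ = 1 - v ^ 2 / 2 := by linarith
  rw [F, rpow_neg_half_eq h, ← hv, hcos]
  field_simp
  ring

lemma F_pi_div_three : F (π/3) = -(1/3) := by
  rw [F, Real.cos_pi_div_three]
  norm_num

lemma F_le {φ : ℝ} (h0 : 0 < φ) (h1 : φ ≤ π) : F φ ≤ (2/3) * (1 - 1/φ) := by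
  have hb := base_pos h0 h1
  have hc : 2 - 2 * Real.cos φ ≤ φ ^ 2 := by
    nlinarith [Real.one_sub_sq_div_two_le_cos (x := φ)]
  have hv : Real.sqrt (2 - 2 * Real.cos φ) ≤ φ := by
    calc Real.sqrt (2 - 2 * Real.cos φ) ≤ Real.sqrt (φ ^ 2) := Real.sqrt_le_sqrt hc
    _ = φ := by rw [Real.sqrt_sq h0.le]
  have hv0 : 0 < Real.sqrt (2 - 2 * Real.cos φ) := Real.sqrt_pos.mpr hb
  have hinv : 1/φ ≤ (Real.sqrt (2 - 2 * Real.cos φ))⁻¹ := by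
    rw [one_div]
    exact inv_anti₀ hv0 hv
  rw [F, rpow_neg_half_eq hb]
  have := Real.cos_le_one φ
  nlinarith

/-- Positivity of `1 + F` on `[π/3, π]`. -/
lemma one_add_F_nonneg {φ : ℝ} (h1 : π/3 ≤ φ) (h2 : φ ≤ π) : 0 ≤ 1 + F φ := by
  have h0 : 0 < φ := lt_of_lt_of_le (by positivity) h1
  have hb := base_pos h0 h2
  have hcos : Real.cos φ ≤ 1/2 := by
    rw [← Real.cos_pi_div_three]
    exact (Real.strictAntiOn_cos.antitoneOn ⟨by positivity, by linarith [Real.pi_pos]⟩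
      ⟨h0.le, h2⟩ h1)
  set v := Real.sqrt (2 - 2 * Real.cos φ) with hv
  have hv0 : 0 < v := Real.sqrt_pos.mpr hb
  have hv2 : v ^ 2 = 2 - 2 * Real.cos φ := Real.sq_sqrt hb.le
  have hv1 : 1 ≤ v := by nlinarith
  have hv4 : v ≤ 2 := by nlinarith [Real.neg_one_le_cos φ]
  rw [one_add_F hb, ← hv]
  have : 0 ≤ (2 - v) * (v ^ 2 + 2 * v - 1) := by nlinarith
  positivity

noncomputable def Fd (φ : ℝ) : ℝ :=
  (2/3) * (Real.sin φ * ((2 - 2 * Real.cos φ) ^ (-(3:ℝ)/2) - 1))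

lemma hasDerivAt_F {φ : ℝ} (h : 0 < 2 - 2 * Real.cos φ) : HasDerivAt F (Fd φ) φ := by
  have hu : HasDerivAt (fun φ : ℝ => 2 - 2 * Real.cos φ) (2 * Real.sin φ) φ := by
    simpa using ((Real.hasDerivAt_cos φ).const_mul (2:ℝ)).const_sub 2
  have hrp : HasDerivAt (fun φ : ℝ => (2 - 2 * Real.cos φ) ^ (-(1:ℝ)/2))
      ((-(1:ℝ)/2) * (2 - 2 * Real.cos φ) ^ ((-(1:ℝ)/2) - 1) * (2 * Real.sin φ)) φ :=
    by have := (Real.hasDerivAt_rpow_const (p := -(1:ℝ)/2) (Or.inl h.ne')).comp φ hu; exact this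
  have hF := ((Real.hasDerivAt_cos φ).sub hrp).const_mul (2/3 : ℝ)
  have : HasDerivAt F ((2/3 : ℝ) * (-Real.sin φ -
      (-(1:ℝ)/2) * (2 - 2 * Real.cos φ) ^ ((-(1:ℝ)/2) - 1) * (2 * Real.sin φ))) φ := hF
  convert this using 1
  rw [Fd, show ((-(1:ℝ)/2) - 1) = (-(3:ℝ)/2) by norm_num]
  ring

lemma Fd_pos {φ : ℝ} (h1 : 0 < φ) (h2 : φ < π/3) : 0 < Fd φ := by
  have hπ : φ < π := lt_trans h2 (by nlinarith [Real.pi_pos])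
  have hs : 0 < Real.sin φ := Real.sin_pos_of_pos_of_lt_pi h1 hπ
  have hcos : Real.cos (π/3) < Real.cos φ := by
    apply Real.strictAntiOn_cos ⟨h1.le, hπ.le⟩ ⟨by positivity, by linarith [Real.pi_pos]⟩ h2
  rw [Real.cos_pi_div_three] at hcos
  have hu0 : 0 < 2 - 2 * Real.cos φ := base_pos h1 hπ.le
  have hu1 : 2 - 2 * Real.cos φ < 1 := by linarith
  have : 1 < (2 - 2 * Real.cos φ) ^ (-(3:ℝ)/2) :=
    (Real.one_lt_rpow_iff_of_pos hu0).mpr (Or.inr ⟨hu1, by norm_num⟩)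
  rw [Fd]
  nlinarith

lemma continuousAt_F {φ : ℝ} (h : 0 < 2 - 2 * Real.cos φ) : ContinuousAt F φ :=
  (hasDerivAt_F h).continuousAt

lemma continuousAt_Fd {φ : ℝ} (h : 0 < 2 - 2 * Real.cos φ) : ContinuousAt Fd φ := by
  have hc : ContinuousAt (fun φ : ℝ => 2 - 2 * Real.cos φ) φ := by fun_prop
  have h1 : ContinuousAt (fun φ : ℝ => (2 - 2 * Real.cos φ) ^ (-(3:ℝ)/2)) φ :=
    hc.rpow_const (Or.inl h.ne')
  exact continuousAt_const.mul (Real.continuous_sin.continuousAt.mul (h1.sub continuousAt_const))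

lemma F_strictMonoOn : StrictMonoOn F (Set.Ioc 0 (π/3)) := by
  have hsub : ∀ x ∈ Set.Ioc (0:ℝ) (π/3), 0 < 2 - 2 * Real.cos x := fun x hx =>
    base_pos hx.1 (le_trans hx.2 (by linarith [Real.pi_pos]))
  apply strictMonoOn_of_deriv_pos (convex_Ioc _ _)
  · exact fun x hx => (continuousAt_F (hsub x hx)).continuousWithinAt
  · rw [interior_Ioc]
    intro x hx
    rw [(hasDerivAt_F (hsub x (Set.Ioo_subset_Ioc_self hx))).deriv]
    exact Fd_pos hx.1 hx.2

lemma sqrt_two_lt : Real.sqrt 2 < 1.415 := by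
  nlinarith [Real.sq_sqrt (show (0:ℝ) ≤ 2 by norm_num), Real.sqrt_nonneg 2]

lemma sqrt_two_gt : 1.414 < Real.sqrt 2 := by
  nlinarith [Real.sq_sqrt (show (0:ℝ) ≤ 2 by norm_num), Real.sqrt_nonneg 2]

/-- `1 + F ≥ 1/10` on `[π/4, π/2]`. -/
lemma one_add_F_lower {φ : ℝ} (h1 : π/4 ≤ φ) (h2 : φ ≤ π/2) : 1/10 ≤ 1 + F φ := by
  have hπ := Real.pi_pos
  have h0 : 0 < φ := lt_of_lt_of_le (by positivity) h1
  have hπ2 : φ ≤ π := by linarith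
  have hb := base_pos h0 hπ2
  have hcos1 : Real.cos φ ≤ Real.sqrt 2 / 2 := by
    rw [← Real.cos_pi_div_four]
    exact Real.strictAntiOn_cos.antitoneOn ⟨by positivity, by linarith⟩ ⟨h0.le, hπ2⟩ h1
  have hcos0 : 0 ≤ Real.cos φ := Real.cos_nonneg_of_mem_Icc ⟨by linarith, h2⟩
  set v := Real.sqrt (2 - 2 * Real.cos φ) with hv
  have hv0 : 0 ≤ v := Real.sqrt_nonneg _
  have hv2 : v ^ 2 = 2 - 2 * Real.cos φ := Real.sq_sqrt hb.le
  have hs2 := sqrt_two_lt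
  have hvlow : (0.7:ℝ) < v := by nlinarith
  have hvhigh : v < 1.415 := by nlinarith
  rw [one_add_F hb, ← hv]
  rw [le_div_iff₀ (by positivity : (0:ℝ) < 3 * v)]
  nlinarith

lemma F_pi_div_four_gt : -1 < F (π/4) := by
  have hπ := Real.pi_pos
  have h := one_add_F_lower (le_refl (π/4)) (by linarith)
  linarith

/-- Existence of the root, with a lower bound. -/
lemma exists_root (δ : ℝ) (hδ : 0 < δ) :
    ∃ c : ℝ, 2/(5 + 3*δ) ≤ c ∧ c ∈ Set.Ioo 0 (π/3) ∧ 1 + δ + F c = 0 := by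
  have hπ := Real.pi_gt_three
  set a : ℝ := 2/(5 + 3*δ) with ha
  have ha0 : 0 < a := by positivity
  have ha1 : a ≤ 2/5 := by
    rw [ha, div_le_div_iff₀ (by linarith) (by norm_num)]
    linarith
  have ha3 : a < π/3 := by linarith
  have hFa : F a ≤ -(1 + δ) := by
    have := F_le ha0 (by linarith)
    have h5 : 1/a = (5 + 3*δ)/2 := by
      rw [ha, one_div_div]
    rw [h5] at this
    linarith
  have hcont : ContinuousOn F (Set.Icc a (π/3)) := fun x hx =>
    (continuousAt_F (base_pos (lt_of_lt_of_le ha0 hx.1)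
      (le_trans hx.2 (by linarith)))).continuousWithinAt
  have hiv := intermediate_value_Icc (le_of_lt ha3) hcont
  have hmem : -(1+δ) ∈ Set.Icc (F a) (F (π/3)) := by
    constructor
    · exact hFa
    · rw [F_pi_div_three]; linarith
  obtain ⟨c, hc, hFc⟩ := hiv hmem
  refine ⟨c, hc.1, ⟨lt_of_lt_of_le ha0 hc.1, ?_⟩, by linarith⟩
  rcases lt_or_eq_of_le hc.2 with h | h
  · exact h
  · exfalso; rw [h, F_pi_div_three] at hFc; linarith

lemma pi_lt : π < 3.15 := by linarith [Real.pi_lt_d2]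

/-- Factorization of `1 + F (π - s)` via `t = cos (s/2)`. -/
lemma G_fact {s : ℝ} (h0 : 0 ≤ s) (h2 : s ≤ π/2) :
    1 + F (π - s) = (1 - Real.cos (s/2)) *
      (4 * Real.cos (s/2) ^ 2 + 4 * Real.cos (s/2) - 1) / (3 * Real.cos (s/2)) := by
  have hπ := Real.pi_pos
  set t := Real.cos (s/2) with htdef
  have ht2 : Real.cos s = 2 * t ^ 2 - 1 := by
    have := Real.cos_two_mul (s/2)
    rw [show 2 * (s/2) = s by ring] at this
    linarith
  have ht0 : 0 < t := by
    apply Real.cos_pos_of_mem_Ioo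
    constructor <;> [linarith; linarith]
  have hcs : Real.cos (π - s) = -Real.cos s := Real.cos_pi_sub s
  have hbase : 0 < 2 - 2 * Real.cos (π - s) := by rw [hcs, ht2]; nlinarith
  have hveq : Real.sqrt (2 - 2 * Real.cos (π - s)) = 2 * t := by
    rw [hcs, ht2, show 2 - 2 * -(2 * t ^ 2 - 1) = (2*t)^2 by ring, Real.sqrt_sq (by linarith)]
  rw [one_add_F hbase, hveq]
  field_simp
  ring

set_option maxHeartbeats 2000000 in
/-- Quantitative bounds for `G s = 1 + F (π - s)` on `[0, π/2]`. -/
lemma G_bounds {s : ℝ} (h0 : 0 ≤ s) (h2 : s ≤ π/2) :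
    (1/8) * s^2 ≤ 1 + F (π - s) ∧ |(1 + F (π - s)) - (7/24) * s^2| ≤ (1/7) * s^4 := by
  have hπ := Real.pi_pos
  have hs15 : s ≤ 1.575 := by linarith [pi_lt]
  set t := Real.cos (s/2) with htdef
  have ht1 : t ≤ 1 := Real.cos_le_one _
  have htlow : 0.707 < t := by
    have : Real.cos (π/4) ≤ t := by
      apply Real.strictAntiOn_cos.antitoneOn ⟨by positivity, by linarith⟩
        ⟨by linarith, by linarith⟩ (by linarith)
    rw [Real.cos_pi_div_four] at this
    nlinarith [sqrt_two_gt]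
  have hcb := Real.cos_bound (x := s/2) (by rw [abs_of_nonneg (by positivity)]; linarith)
  rw [abs_of_nonneg (by positivity : (0:ℝ) ≤ s/2)] at hcb
  have hcb' := abs_le.mp hcb
  have htl : 1 - s^2/8 - (5/1536) * s^4 ≤ t := by nlinarith [hcb'.1]
  have htu : t ≤ 1 - s^2/8 + (5/1536) * s^4 := by nlinarith [hcb'.2]
  have hs2 : s^2 ≤ 2.4807 := by nlinarith
  have hs4 : s^4 ≤ 2.4807 * s^2 := by nlinarith [sq_nonneg s]
  rw [G_fact h0 h2, ← htdef]
  have ht0 : (0:ℝ) < 3 * t := by linarith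
  -- pass to u = 1 - t
  obtain ⟨u, hu0, hu29, hul, huh, hteq⟩ :
      ∃ u : ℝ, 0 ≤ u ∧ u ≤ 0.293 ∧ u ≤ s^2/8 + 5/1536*s^4 ∧ s^2/8 - 5/1536*s^4 ≤ u ∧
        t = 1 - u :=
    ⟨1 - t, by linarith, by linarith, by linarith, by linarith, by ring⟩
  have h1 : u ≤ 0.1332 * s^2 := by linarith
  have h2 : u * s^2 ≤ 0.1332 * s^4 := by nlinarith [mul_le_mul_of_nonneg_right h1 (sq_nonneg s)]
  have h3 : u^2 ≤ 0.1332 * (u * s^2) := by nlinarith [mul_le_mul_of_nonneg_right h1 hu0]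
  have h4 : u^3 ≤ 0.293 * u^2 := by nlinarith [mul_le_mul_of_nonneg_right hu29 (sq_nonneg u)]
  have h5 : s^4 * u ≤ 0.293 * s^4 := by
    nlinarith [mul_le_mul_of_nonneg_left hu29 (by positivity : (0:ℝ) ≤ s^4)]
  have h6 : u^2 ≤ 0.01775 * s^4 := by nlinarith
  have h7 : 0 ≤ u^2 := sq_nonneg u
  have h8 : 0 ≤ s^2 * u := by positivity
  rw [hteq] at ht0 ⊢
  constructor
  · rw [le_div_iff₀ ht0]
    nlinarith [h6, hul, huh, hs4, h4, h7]
  · have hup : (1 - (1-u)) * (4*(1-u)^2+4*(1-u)-1) / (3*(1-u)) ≤ 7/24*s^2 + 1/7*s^4 := by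
      rw [div_le_iff₀ ht0]
      nlinarith [h2, h4, h5, h6, hul, h7]
    have hlow : 7/24*s^2 - 1/7*s^4 ≤ (1 - (1-u)) * (4*(1-u)^2+4*(1-u)-1) / (3*(1-u)) := by
      rw [le_div_iff₀ ht0]
      nlinarith [h2, h3, h5, h6, huh, h7, h8]
    rw [abs_le]
    constructor <;> linarith

lemma model_cont {δ : ℝ} (hδ : 0 < δ) :
    Continuous (fun s : ℝ => (δ + (7/24) * s^2) ^ (-(1:ℝ)/2)) := by
  have hb : Continuous (fun s : ℝ => δ + (7/24) * s^2) := by continuity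
  apply hb.rpow_const
  intro x
  exact Or.inl (by positivity)

lemma integral_model {δ : ℝ} (hδ : 0 < δ) (L : ℝ) :
    ∫ s in (0:ℝ)..L, (δ + (7/24) * s^2) ^ (-(1:ℝ)/2)
      = (Real.sqrt (7/24))⁻¹ * Real.arsinh (Real.sqrt ((7/24)/δ) * L) := by
  set k : ℝ := 7/24 with hk
  have hk0 : (0:ℝ) < k := by norm_num
  have hd : ∀ s : ℝ, HasDerivAt (fun s : ℝ => (Real.sqrt k)⁻¹ * Real.arsinh (Real.sqrt (k/δ) * s))
      ((δ + k * s^2) ^ (-(1:ℝ)/2)) s := by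
    intro s
    have h1 : HasDerivAt (fun s : ℝ => Real.sqrt (k/δ) * s) (Real.sqrt (k/δ)) s := by
      simpa using (hasDerivAt_id s).const_mul (Real.sqrt (k/δ))
    have h2 := ((Real.hasDerivAt_arsinh (Real.sqrt (k/δ) * s)).comp s h1).const_mul
      (Real.sqrt k)⁻¹
    refine HasDerivAt.congr_deriv h2 (Eq.symm ?_)
    have hsq : (Real.sqrt (k/δ) * s)^2 = (k/δ) * s^2 := by
      rw [mul_pow, Real.sq_sqrt (by positivity)]
    rw [hsq, rpow_neg_half_eq (by positivity)]
    have h1x : 1 + k/δ * s^2 = (δ + k*s^2)/δ := by field_simp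
    rw [h1x, Real.sqrt_div (by positivity) δ, Real.sqrt_div' k hδ.le]
    have s1 : 0 < Real.sqrt δ := Real.sqrt_pos.mpr hδ
    have s2 : 0 < Real.sqrt k := Real.sqrt_pos.mpr hk0
    have s3 : 0 < Real.sqrt (δ + k*s^2) := Real.sqrt_pos.mpr (by positivity)
    field_simp
  have hint : IntervalIntegrable (fun s : ℝ => (δ + k * s^2) ^ (-(1:ℝ)/2)) volume 0 L :=
    (model_cont hδ).intervalIntegrable 0 L
  have := intervalIntegral.integral_eq_sub_of_hasDerivAt (fun x _ => hd x) hint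
  rw [this]
  simp [Real.arsinh_zero]

/-- The model integral differs from `√(6/7) log (1/δ)` by a bounded amount. -/
lemma model_asymp {δ : ℝ} (hδ : 0 < δ) (hδ1 : δ < 1) :
    |(Real.sqrt (7/24))⁻¹ * Real.arsinh (Real.sqrt ((7/24)/δ) * (π/2))
      - Real.sqrt (6/7) * Real.log (1/δ)|
      ≤ (Real.sqrt (7/24))⁻¹ *
        Real.log ((π/2) * Real.sqrt (7/24) + Real.sqrt (1 + π^2/4 * (7/24))) := by
  have hπ := Real.pi_gt_three
  set k : ℝ := 7/24 with hk
  clear_value k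
  have hk0 : (0:ℝ) < k := by rw [hk]; norm_num
  have s1 : 0 < Real.sqrt δ := Real.sqrt_pos.mpr hδ
  have s2 : 0 < Real.sqrt k := Real.sqrt_pos.mpr hk0
  have hsqk : Real.sqrt k ^ 2 = k := Real.sq_sqrt hk0.le
  have skhalf : (1/2 : ℝ) ≤ Real.sqrt k := by
    nlinarith [hsqk, Real.sqrt_nonneg k, hk]
  have hπ2 : (9:ℝ) < π^2 := by nlinarith
  set R : ℝ := (π/2) * Real.sqrt k + Real.sqrt (δ + π^2/4 * k) with hR
  have hR1 : 1 < R := by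
    have ha2 : Real.sqrt (δ + π^2/4 * k) ^ 2 = δ + π^2/4 * k :=
      Real.sq_sqrt (by positivity)
    have h3 : (0.8:ℝ) ≤ Real.sqrt (δ + π^2/4 * k) := by
      nlinarith [ha2, Real.sqrt_nonneg (δ + π^2/4 * k), hk, hπ2]
    have h4 : (3/4:ℝ) ≤ (π/2) * Real.sqrt k := by nlinarith [skhalf]
    rw [hR]
    linarith
  -- arsinh x = log R - log √δ
  set x : ℝ := Real.sqrt (k/δ) * (π/2) with hx
  have harsinh : Real.arsinh x = Real.log R - Real.log (Real.sqrt δ) := by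
    rw [Real.arsinh]
    have hx2 : x^2 = k/δ * (π^2/4) := by
      rw [hx, mul_pow, Real.sq_sqrt (by positivity)]
      ring
    have h1x : 1 + x^2 = (δ + π^2/4 * k)/δ := by rw [hx2]; field_simp
    have : x + Real.sqrt (1 + x^2) = R / Real.sqrt δ := by
      rw [h1x, Real.sqrt_div (by positivity) δ, hx, hR,
        Real.sqrt_div' k hδ.le]
      field_simp
    rw [this, Real.log_div (by positivity) s1.ne']
  have hlogsqrt : Real.log (Real.sqrt δ) = Real.log δ / 2 := Real.log_sqrt hδ.le
  have hcoef : Real.sqrt (6/7) = (Real.sqrt k)⁻¹ / 2 := by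
    have h67 : Real.sqrt (6/7) * Real.sqrt k = 1/2 := by
      rw [← Real.sqrt_mul (by norm_num), hk, show (6/7 : ℝ) * (7/24) = (1/2)^2 by norm_num,
        Real.sqrt_sq (by norm_num)]
    field_simp at h67 ⊢
    linarith
  have hlog1δ : Real.log (1/δ) = - Real.log δ := by
    rw [one_div, Real.log_inv]
  have hkey : (Real.sqrt k)⁻¹ * Real.arsinh x - Real.sqrt (6/7) * Real.log (1/δ)
      = (Real.sqrt k)⁻¹ * Real.log R := by
    rw [harsinh, hlogsqrt, hcoef, hlog1δ]
    field_simp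
    ring
  rw [hkey]
  -- bound |log R|
  have hRle : R ≤ (π/2) * Real.sqrt k + Real.sqrt (1 + π^2/4 * k) := by
    have : Real.sqrt (δ + π^2/4 * k) ≤ Real.sqrt (1 + π^2/4 * k) :=
      Real.sqrt_le_sqrt (by linarith)
    linarith
  have hlogR0 : 0 ≤ Real.log R := Real.log_nonneg hR1.le
  rw [abs_of_nonneg (by positivity)]
  have : Real.log R ≤ Real.log ((π/2) * Real.sqrt k + Real.sqrt (1 + π^2/4 * k)) :=
    Real.log_le_log (by positivity) hRle
  have hp : (0:ℝ) ≤ (Real.sqrt k)⁻¹ := by positivity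
  exact mul_le_mul_of_nonneg_left this hp

set_option maxHeartbeats 1000000 in
/-- Pointwise comparison of the integrand with the model integrand. -/
lemma diff_bound {δ s : ℝ} (hδ : 0 < δ) (h0 : 0 ≤ s) (h2 : s ≤ π/2) :
    |(1 + δ + F (π - s)) ^ (-(1:ℝ)/2) - (δ + (7/24) * s^2) ^ (-(1:ℝ)/2)| ≤ 2 * s := by
  obtain ⟨hG1, hG2⟩ := G_bounds h0 h2
  have hrw : 1 + δ + F (π - s) = δ + (1 + F (π - s)) := by ring
  set G : ℝ := 1 + F (π - s) with hGdef
  clear_value G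
  have hG0 : 0 ≤ G := le_trans (by positivity) hG1
  have ha0 : 0 < δ + G := by linarith
  have hb0 : 0 < δ + (7/24) * s^2 := by positivity
  rw [hrw, rpow_neg_half_eq ha0, rpow_neg_half_eq hb0]
  rcases eq_or_lt_of_le h0 with h | hs0
  · have hs : s = 0 := h.symm
    subst hs
    have h' := abs_le.mp hG2
    have hGz : G = 0 := le_antisymm (by nlinarith [h'.2]) hG0
    rw [hGz]
    norm_num
  -- s > 0
  set a : ℝ := δ + G with hadef
  set b : ℝ := δ + (7/24) * s^2 with hbdef
  clear_value a b
  have hsa : 0 < Real.sqrt a := Real.sqrt_pos.mpr ha0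
  have hsb : 0 < Real.sqrt b := Real.sqrt_pos.mpr hb0
  have ha2 : Real.sqrt a ^ 2 = a := Real.sq_sqrt ha0.le
  have hb2 : Real.sqrt b ^ 2 = b := Real.sq_sqrt hb0.le
  have hD : (0:ℝ) < Real.sqrt a * Real.sqrt b * (Real.sqrt a + Real.sqrt b) := by positivity
  have inva : Real.sqrt a * (Real.sqrt a)⁻¹ = 1 := mul_inv_cancel₀ hsa.ne'
  have invb : Real.sqrt b * (Real.sqrt b)⁻¹ = 1 := mul_inv_cancel₀ hsb.ne'
  have key : (Real.sqrt a)⁻¹ - (Real.sqrt b)⁻¹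
      = (b - a) / (Real.sqrt a * Real.sqrt b * (Real.sqrt a + Real.sqrt b)) := by
    rw [eq_div_iff hD.ne']
    linear_combination (Real.sqrt b * (Real.sqrt a + Real.sqrt b)) * inva
      - (Real.sqrt a * (Real.sqrt a + Real.sqrt b)) * invb + hb2 - ha2
  rw [key, abs_div, abs_of_pos hD]
  have hnum : |b - a| ≤ (1/7) * s^4 := by
    have hba : b - a = -(G - (7/24) * s^2) := by rw [hadef, hbdef]; ring
    rw [hba, abs_neg]
    exact hG2
  have hsal : 7/20 * s ≤ Real.sqrt a := by
    have h1 : Real.sqrt ((1/8) * s^2) ≤ Real.sqrt a := Real.sqrt_le_sqrt (by linarith)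
    have h2 : Real.sqrt ((1/8) * s^2) = Real.sqrt (1/8) * s := by
      rw [Real.sqrt_mul (by norm_num), Real.sqrt_sq h0]
    have h3 : (7/20:ℝ) ≤ Real.sqrt (1/8) := by
      nlinarith [Real.sq_sqrt (show (0:ℝ) ≤ 1/8 by norm_num), Real.sqrt_nonneg (1/8:ℝ)]
    nlinarith
  have hsbl : 1/2 * s ≤ Real.sqrt b := by
    have h1 : Real.sqrt ((7/24) * s^2) ≤ Real.sqrt b := Real.sqrt_le_sqrt (by linarith)
    have h2 : Real.sqrt ((7/24) * s^2) = Real.sqrt (7/24) * s := by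
      rw [Real.sqrt_mul (by norm_num), Real.sqrt_sq h0]
    have h3 : (1/2:ℝ) ≤ Real.sqrt (7/24) := by
      nlinarith [Real.sq_sqrt (show (0:ℝ) ≤ 7/24 by norm_num), Real.sqrt_nonneg (7/24:ℝ)]
    nlinarith
  have hden : 7/80 * s^3 ≤ Real.sqrt a * Real.sqrt b * (Real.sqrt a + Real.sqrt b) := by
    have e1 : (7/20 * s) * (1/2 * s) ≤ Real.sqrt a * Real.sqrt b :=
      mul_le_mul hsal hsbl (by positivity) hsa.le
    have e2 : (1/2:ℝ) * s ≤ Real.sqrt a + Real.sqrt b := by linarith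
    nlinarith [mul_le_mul e1 e2 (by positivity) (by positivity)]
  calc |b - a| / (Real.sqrt a * Real.sqrt b * (Real.sqrt a + Real.sqrt b))
      ≤ ((1/7) * s^4) / (7/80 * s^3) :=
        div_le_div₀ (by positivity) hnum (by positivity) hden
    _ ≤ 2 * s := by
        rw [div_le_iff₀ (by positivity)]
        nlinarith [pow_pos hs0 3, pow_pos hs0 4]


lemma contOn_g (δ : ℝ) {s : Set ℝ} (h1 : ∀ φ ∈ s, 0 < 2 - 2 * Real.cos φ)
    (h2 : ∀ φ ∈ s, 0 < 1 + δ + F φ) :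
    ContinuousOn (fun φ => (1 + δ + F φ) ^ (-(1:ℝ)/2)) s := by
  intro x hx
  have hc : ContinuousAt (fun φ => 1 + δ + F φ) x :=
    continuousAt_const.add (continuousAt_F (h1 x hx))
  exact (hc.rpow_const (Or.inl (h2 x hx).ne')).continuousWithinAt

lemma integral_shift_rpow {c d : ℝ} (hcd : c ≤ d) :
    ∫ x in c..d, (x - c) ^ (-(1:ℝ)/2) = 2 * (d - c) ^ ((1:ℝ)/2) := by
  rw [intervalIntegral.integral_comp_sub_right (fun x : ℝ => x ^ (-(1:ℝ)/2)) c, sub_self]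
  rw [integral_rpow (Or.inl (by norm_num))]
  rw [show (-(1:ℝ)/2 + 1) = (1:ℝ)/2 by norm_num]
  rw [Real.zero_rpow (by norm_num : (1:ℝ)/2 ≠ 0)]
  ring

end HS

set_option maxHeartbeats 4000000 in
theorem stmt0 :
    ∃ φmin : ℝ → ℝ,
      (∀ δ : ℝ, 0 < δ →
        φmin δ ∈ Set.Ioo 0 (π/3) ∧
        1 + δ + F (φmin δ) = 0 ∧
        (∀ φ ∈ Set.Ioo 0 (π/3), 1 + δ + F φ = 0 → φ = φmin δ) ∧
        (∀ φ ∈ Set.Ioc (φmin δ) π, 0 < 1 + δ + F φ)) ∧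
      ∃ C : ℝ, 0 < C ∧ ∃ δ₀ ∈ Set.Ioo (0:ℝ) 1, ∀ δ ∈ Set.Ioo (0:ℝ) δ₀,
        |(∫ φ in (φmin δ)..π, (1 + δ + F φ) ^ (-(1:ℝ)/2)) -
            Real.sqrt (6/7) * Real.log (1/δ)| ≤ C := by
  classical
  have hπ3 : (3:ℝ) < π := Real.pi_gt_three
  set φm : ℝ → ℝ := fun δ => if h : 0 < δ then (HS.exists_root δ h).choose else 1 with hφmdef
  have hspec : ∀ δ : ℝ, 0 < δ → 2/(5 + 3*δ) ≤ φm δ ∧ φm δ ∈ Set.Ioo 0 (π/3) ∧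
      1 + δ + F (φm δ) = 0 := by
    intro δ hδ
    rw [hφmdef]
    simp only [dif_pos hδ]
    exact (HS.exists_root δ hδ).choose_spec
  have hA : ∀ δ : ℝ, 0 < δ →
      φm δ ∈ Set.Ioo 0 (π/3) ∧ 1 + δ + F (φm δ) = 0 ∧
      (∀ φ ∈ Set.Ioo 0 (π/3), 1 + δ + F φ = 0 → φ = φm δ) ∧
      (∀ φ ∈ Set.Ioc (φm δ) π, 0 < 1 + δ + F φ) := by
    intro δ hδ
    obtain ⟨hlow, hmem, hroot⟩ := hspec δ hδ
    refine ⟨hmem, hroot, ?_, ?_⟩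
    · intro φ hφ hφ0
      have h1 : F φ = F (φm δ) := by linarith
      exact HS.F_strictMonoOn.injOn (Set.Ioo_subset_Ioc_self hφ)
        (Set.Ioo_subset_Ioc_self hmem) h1
    · intro φ hφ
      rcases le_or_gt φ (π/3) with hc | hc
      · have : F (φm δ) < F φ :=
          HS.F_strictMonoOn (Set.Ioo_subset_Ioc_self hmem)
            ⟨lt_trans hmem.1 hφ.1, hc⟩ hφ.1
        linarith
      · have := HS.one_add_F_nonneg hc.le hφ.2
        linarith
  refine ⟨φm, hA, ?_⟩
  -- ===== Part B =====
  -- minimum of the derivative on [1/4, π/4]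
  have hKset : ∀ x ∈ Set.Icc (1/4:ℝ) (π/4), 0 < 2 - 2 * Real.cos x := fun x hx =>
    HS.base_pos (lt_of_lt_of_le (by norm_num) hx.1) (le_trans hx.2 (by linarith))
  obtain ⟨xm, hxm, hxmin⟩ := (isCompact_Icc (a := (1/4:ℝ)) (b := π/4)).exists_isMinOn
    (Set.nonempty_Icc.mpr (by linarith))
    (fun x hx => (HS.continuousAt_Fd (hKset x hx)).continuousWithinAt)
  set m : ℝ := HS.Fd xm with hmdef
  have hm0 : 0 < m :=
    HS.Fd_pos (lt_of_lt_of_le (by norm_num) hxm.1) (lt_of_le_of_lt hxm.2 (by linarith))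
  set C1 : ℝ := m ^ (-(1:ℝ)/2) * (2 * (π/4) ^ ((1:ℝ)/2)) with hC1
  set C2 : ℝ := (1/10 : ℝ) ^ (-(1:ℝ)/2) * (π/2 - π/4) with hC2
  set C3 : ℝ := π^2/4 with hC3
  set C4 : ℝ := (Real.sqrt (7/24))⁻¹ *
      Real.log ((π/2) * Real.sqrt (7/24) + Real.sqrt (1 + π^2/4 * (7/24))) with hC4
  have hC1nn : 0 ≤ C1 := by
    apply mul_nonneg (Real.rpow_nonneg hm0.le _)
    exact mul_nonneg (by norm_num) (Real.rpow_nonneg (by positivity) _)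
  have hC2nn : 0 ≤ C2 := mul_nonneg (Real.rpow_nonneg (by norm_num) _) (by linarith)
  have hC3nn : 0 ≤ C3 := by rw [hC3]; positivity
  have hC4nn : 0 ≤ C4 := by
    apply mul_nonneg (by positivity)
    apply Real.log_nonneg
    have h1 : Real.sqrt 1 ≤ Real.sqrt (1 + π^2/4 * (7/24)) :=
      Real.sqrt_le_sqrt (by nlinarith [sq_nonneg π])
    rw [Real.sqrt_one] at h1
    have h2 : 0 ≤ (π/2) * Real.sqrt (7/24) := by positivity
    linarith
  refine ⟨C1 + C2 + C3 + C4 + 1, by linarith, 1/2, ⟨by norm_num, by norm_num⟩, ?_⟩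
  intro δ hδm
  obtain ⟨hδ0, hδh⟩ := hδm
  obtain ⟨hlow, hmem, hroot⟩ := hspec δ hδ0
  have hposIoc := (hA δ hδ0).2.2.2
  set c : ℝ := φm δ with hcdef
  have hq : (1/4:ℝ) ≤ c := by
    refine le_trans ?_ hlow
    rw [le_div_iff₀ (by linarith)]
    linarith
  have hcπ4 : c < π/4 := by
    by_contra hcon
    push_neg at hcon
    have h1 : F (π/4) ≤ F c := by
      rcases eq_or_lt_of_le hcon with h | h
      · rw [h]
      · exact (HS.F_strictMonoOn ⟨by positivity, by linarith⟩
          (Set.Ioo_subset_Ioc_self hmem) h).le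
    have := HS.F_pi_div_four_gt
    linarith
  -- MVT lower bound on [c, π/4]
  have hMVT : ∀ φ ∈ Set.Icc c (π/4), m * (φ - c) ≤ 1 + δ + F φ := by
    intro φ hφ
    have key := (convex_Icc (1/4:ℝ) (π/4)).mul_sub_le_image_sub_of_le_deriv
      (fun x hx => (HS.continuousAt_F (hKset x hx)).continuousWithinAt)
      (fun x hx => by
        rw [interior_Icc] at hx
        exact (HS.hasDerivAt_F
          (hKset x (Set.Ioo_subset_Icc_self hx))).differentiableAt.differentiableWithinAt)
      (fun x hx => by
        rw [interior_Icc] at hx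
        rw [(HS.hasDerivAt_F (hKset x (Set.Ioo_subset_Icc_self hx))).deriv]
        exact isMinOn_iff.mp hxmin x (Set.Ioo_subset_Icc_self hx))
      c ⟨hq, hcπ4.le⟩ φ ⟨le_trans hq hφ.1, hφ.2⟩ hφ.1
    linarith [key]
  -- integrability and bound on [c, π/4]
  have hbnd_int : IntervalIntegrable (fun x => m ^ (-(1:ℝ)/2) * (x - c) ^ (-(1:ℝ)/2))
      volume c (π/4) := by
    have h0 : IntervalIntegrable (fun x : ℝ => x ^ (-(1:ℝ)/2)) volume 0 (π/4 - c) :=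
      intervalIntegral.intervalIntegrable_rpow' (by norm_num)
    have h1 := (h0.comp_sub_right c).const_mul (m ^ (-(1:ℝ)/2))
    rw [zero_add, sub_add_cancel] at h1
    exact h1
  have hgIoc : ∀ x ∈ Set.Ioc c (π/4), 0 < 1 + δ + F x := fun x hx =>
    hposIoc x ⟨hx.1, le_trans hx.2 (by linarith)⟩
  have hKset2 : ∀ x ∈ Set.Ioc c (π/4), 0 < 2 - 2 * Real.cos x := fun x hx =>
    HS.base_pos (lt_trans hmem.1 hx.1) (le_trans hx.2 (by linarith))
  have hgcont1 : ContinuousOn (fun φ => (1 + δ + F φ) ^ (-(1:ℝ)/2)) (Set.Ioc c (π/4)) :=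
    HS.contOn_g δ hKset2 hgIoc
  have hptbound : ∀ x ∈ Set.Ioc c (π/4),
      (1 + δ + F x) ^ (-(1:ℝ)/2) ≤ m ^ (-(1:ℝ)/2) * (x - c) ^ (-(1:ℝ)/2) := by
    intro x hx
    have h1 : 0 < m * (x - c) := mul_pos hm0 (by linarith [hx.1])
    have h2 := hMVT x ⟨hx.1.le, hx.2⟩
    calc (1 + δ + F x) ^ (-(1:ℝ)/2) ≤ (m * (x - c)) ^ (-(1:ℝ)/2) :=
        Real.rpow_le_rpow_of_nonpos h1 h2 (by norm_num)
      _ = m ^ (-(1:ℝ)/2) * (x - c) ^ (-(1:ℝ)/2) :=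
        Real.mul_rpow hm0.le (by linarith [hx.1])
  have hint1 : IntervalIntegrable (fun φ => (1 + δ + F φ) ^ (-(1:ℝ)/2)) volume c (π/4) := by
    apply hbnd_int.mono_fun'
    · rw [Set.uIoc_of_le hcπ4.le]
      exact hgcont1.aestronglyMeasurable measurableSet_Ioc
    · rw [Set.uIoc_of_le hcπ4.le]
      refine (ae_restrict_iff' measurableSet_Ioc).mpr (Filter.Eventually.of_forall ?_)
      intro x hx
      have hb0 : 0 ≤ 1 + δ + F x := (hgIoc x hx).le
      show ‖(1 + δ + F x) ^ (-(1:ℝ)/2)‖ ≤ m ^ (-(1:ℝ)/2) * (x - c) ^ (-(1:ℝ)/2)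
      rw [Real.norm_eq_abs, abs_of_nonneg (Real.rpow_nonneg hb0 _)]
      exact hptbound x hx
  have hI1 : (∫ φ in c..(π/4), (1 + δ + F φ) ^ (-(1:ℝ)/2)) ≤ C1 := by
    have hmono : (∫ φ in c..(π/4), (1 + δ + F φ) ^ (-(1:ℝ)/2))
        ≤ ∫ x in c..(π/4), m ^ (-(1:ℝ)/2) * (x - c) ^ (-(1:ℝ)/2) := by
      apply intervalIntegral.integral_mono_on hcπ4.le hint1 hbnd_int
      intro x hx
      rcases eq_or_lt_of_le hx.1 with h | h
      · rw [← h, hroot, Real.zero_rpow (by norm_num : -(1:ℝ)/2 ≠ 0)]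
        exact mul_nonneg (Real.rpow_nonneg hm0.le _)
          (Real.rpow_nonneg (by linarith : (0:ℝ) ≤ c - c) _)
      · exact hptbound x ⟨h, hx.2⟩
    have heval : (∫ x in c..(π/4), m ^ (-(1:ℝ)/2) * (x - c) ^ (-(1:ℝ)/2))
        = m ^ (-(1:ℝ)/2) * (2 * (π/4 - c) ^ ((1:ℝ)/2)) := by
      rw [intervalIntegral.integral_const_mul, HS.integral_shift_rpow hcπ4.le]
    have hle2 : (π/4 - c) ^ ((1:ℝ)/2) ≤ (π/4) ^ ((1:ℝ)/2) :=
      Real.rpow_le_rpow (by linarith) (by linarith) (by norm_num)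
    have hm' : 0 ≤ m ^ (-(1:ℝ)/2) := Real.rpow_nonneg hm0.le _
    rw [hC1]
    refine le_trans hmono (le_trans (le_of_eq heval) ?_)
    exact mul_le_mul_of_nonneg_left (by linarith) hm'
  have hI1nn : 0 ≤ ∫ φ in c..(π/4), (1 + δ + F φ) ^ (-(1:ℝ)/2) := by
    apply intervalIntegral.integral_nonneg hcπ4.le
    intro u hu
    exact Real.rpow_nonneg
      (le_trans (mul_nonneg hm0.le (by linarith [hu.1])) (hMVT u hu)) _
  -- middle piece [π/4, π/2]
  have hIccKs : ∀ x ∈ Set.Icc (π/4:ℝ) (π/2), 0 < 2 - 2*Real.cos x := fun x hx =>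
    HS.base_pos (lt_of_lt_of_le (by positivity) hx.1) (le_trans hx.2 (by linarith))
  have hIccpos : ∀ x ∈ Set.Icc (π/4:ℝ) (π/2), 0 < 1 + δ + F x := fun x hx => by
    have := HS.one_add_F_lower hx.1 hx.2
    linarith
  have hint2 : IntervalIntegrable (fun φ => (1 + δ + F φ) ^ (-(1:ℝ)/2)) volume (π/4) (π/2) := by
    apply ContinuousOn.intervalIntegrable
    rw [Set.uIcc_of_le (by linarith : (π/4:ℝ) ≤ π/2)]
    exact HS.contOn_g δ hIccKs hIccpos
  have hI2 : (∫ φ in (π/4:ℝ)..(π/2), (1 + δ + F φ) ^ (-(1:ℝ)/2)) ≤ C2 := by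
    have hmono : (∫ φ in (π/4:ℝ)..(π/2), (1 + δ + F φ) ^ (-(1:ℝ)/2))
        ≤ ∫ _ in (π/4:ℝ)..(π/2), (1/10 : ℝ) ^ (-(1:ℝ)/2) := by
      apply intervalIntegral.integral_mono_on (by linarith) hint2 intervalIntegrable_const
      intro x hx
      have h10 := HS.one_add_F_lower hx.1 hx.2
      exact Real.rpow_le_rpow_of_nonpos (by norm_num) (by linarith) (by norm_num)
    rw [intervalIntegral.integral_const, smul_eq_mul] at hmono
    rw [hC2]
    linarith
  have hI2nn : 0 ≤ ∫ φ in (π/4:ℝ)..(π/2), (1 + δ + F φ) ^ (-(1:ℝ)/2) := by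
    apply intervalIntegral.integral_nonneg (by linarith)
    exact fun u hu => Real.rpow_nonneg (hIccpos u hu).le _
  -- last piece [π/2, π] and comparison with the model
  have hIcc3Ks : ∀ x ∈ Set.Icc (π/2:ℝ) π, 0 < 2 - 2*Real.cos x := fun x hx =>
    HS.base_pos (lt_of_lt_of_le (by positivity) hx.1) hx.2
  have hIcc3pos : ∀ x ∈ Set.Icc (π/2:ℝ) π, 0 < 1 + δ + F x := fun x hx => by
    have := HS.one_add_F_nonneg (le_trans (by linarith) hx.1) hx.2
    linarith
  have hint3 : IntervalIntegrable (fun φ => (1 + δ + F φ) ^ (-(1:ℝ)/2)) volume (π/2) π := by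
    apply ContinuousOn.intervalIntegrable
    rw [Set.uIcc_of_le (by linarith : (π/2:ℝ) ≤ π)]
    exact HS.contOn_g δ hIcc3Ks hIcc3pos
  have hsub : (∫ φ in (π/2:ℝ)..π, (1 + δ + F φ) ^ (-(1:ℝ)/2))
      = ∫ s in (0:ℝ)..(π/2), (1 + δ + F (π - s)) ^ (-(1:ℝ)/2) := by
    have h := intervalIntegral.integral_comp_sub_left (a := (0:ℝ)) (b := π/2)
      (fun φ => (1 + δ + F φ) ^ (-(1:ℝ)/2)) π
    rw [sub_zero, show π - π/2 = π/2 by ring] at h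
    exact h.symm
  have hint3' : IntervalIntegrable (fun s => (1 + δ + F (π - s)) ^ (-(1:ℝ)/2))
      volume 0 (π/2) := by
    apply ContinuousOn.intervalIntegrable
    rw [Set.uIcc_of_le (by linarith : (0:ℝ) ≤ π/2)]
    have hmaps : Set.MapsTo (fun s : ℝ => π - s) (Set.Icc 0 (π/2)) (Set.Icc (π/2) π) := by
      intro x hx
      simp only [Set.mem_Icc] at hx ⊢
      constructor
      · linarith [hx.2]
      · linarith [hx.1]
    exact (HS.contOn_g δ hIcc3Ks hIcc3pos).comp
      ((continuous_const.sub continuous_id).continuousOn) hmaps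
  have hint4 : IntervalIntegrable (fun s : ℝ => (δ + (7/24)*s^2) ^ (-(1:ℝ)/2)) volume 0 (π/2) :=
    (HS.model_cont hδ0).intervalIntegrable 0 (π/2)
  have hdiff : |(∫ s in (0:ℝ)..(π/2), (1 + δ + F (π - s)) ^ (-(1:ℝ)/2))
      - ∫ s in (0:ℝ)..(π/2), (δ + (7/24)*s^2) ^ (-(1:ℝ)/2)| ≤ C3 := by
    rw [← intervalIntegral.integral_sub hint3' hint4]
    refine le_trans (intervalIntegral.abs_integral_le_integral_abs (by positivity)) ?_
    have h2 : (∫ s in (0:ℝ)..(π/2),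
        |(1 + δ + F (π - s)) ^ (-(1:ℝ)/2) - (δ + (7/24)*s^2) ^ (-(1:ℝ)/2)|)
        ≤ ∫ s in (0:ℝ)..(π/2), 2*s := by
      apply intervalIntegral.integral_mono_on (by positivity) ((hint3'.sub hint4).abs)
        ((continuous_const.mul continuous_id).intervalIntegrable 0 (π/2))
      intro x hx
      exact HS.diff_bound hδ0 hx.1 hx.2
    refine le_trans h2 ?_
    rw [intervalIntegral.integral_const_mul, integral_id, hC3]
    apply le_of_eq
    ring
  have hJ := HS.integral_model hδ0 (π/2)
  have hJA := HS.model_asymp hδ0 (by linarith : δ < 1)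
  have hsplit1 := intervalIntegral.integral_add_adjacent_intervals hint1 hint2
  have hsplit2 := intervalIntegral.integral_add_adjacent_intervals (hint1.trans hint2) hint3
  have habs1 := abs_le.mp hdiff
  have habs2 := abs_le.mp hJA
  have htot : (∫ φ in c..π, (1 + δ + F φ) ^ (-(1:ℝ)/2))
      = (∫ φ in c..(π/4), (1 + δ + F φ) ^ (-(1:ℝ)/2))
      + (∫ φ in (π/4:ℝ)..(π/2), (1 + δ + F φ) ^ (-(1:ℝ)/2))
      + (∫ s in (0:ℝ)..(π/2), (1 + δ + F (π - s)) ^ (-(1:ℝ)/2)) := by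
    rw [← hsplit2, ← hsplit1, hsub]
  rw [htot, abs_le]
  constructor
  · linarith [habs1.1, habs1.2, habs2.1, habs2.2, hI1, hI2, hI1nn, hI2nn, hJ]
  · linarith [habs1.1, habs1.2, habs2.1, habs2.2, hI1, hI2, hI1nn, hI2nn, hJ]
end

section
/- There exist η > 0 and a real-analytic function x : (−η, η) → ℝ such that x(0) = (√2 − 1)/2, for every δ ∈ (−η, η) one has 4·x(δ)³ − (5 + 3δ)·x(δ) + 1 = 0 and 0 < x(δ) < 1, and the function φmin(δ) := 2·arcsin(x(δ)) satisfies φmin(0) = 2·arcsin((√2 − 1)/2) and φmin′(0) = −3(√2 − 1)/((3√2 − 2)·√(1 + 2√2)). (Consequently φmin(δ) = 2 arcsin((√2−1)/2) − c₀·δ + O(δ²) with c₀ = 3(√2−1)/((3√2−2)√(1+2√2)).) -/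
open Real

set_option maxHeartbeats 2000000 in
theorem stmt2 :
    ∃ η : ℝ, 0 < η ∧ ∃ x : ℝ → ℝ,
      AnalyticOnNhd ℝ x (Set.Ioo (-η) η) ∧
      x 0 = (Real.sqrt 2 - 1) / 2 ∧
      (∀ δ ∈ Set.Ioo (-η) η,
        4 * x δ ^ 3 - (5 + 3 * δ) * x δ + 1 = 0 ∧ 0 < x δ ∧ x δ < 1) ∧
      2 * Real.arcsin (x 0) = 2 * Real.arcsin ((Real.sqrt 2 - 1) / 2) ∧
      HasDerivAt (fun δ => 2 * Real.arcsin (x δ))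
        (-(3 * (Real.sqrt 2 - 1) /
            ((3 * Real.sqrt 2 - 2) * Real.sqrt (1 + 2 * Real.sqrt 2)))) 0 := by
  set s : ℝ := Real.sqrt 2 with hs_def
  have hs2 : s ^ 2 = 2 := Real.sq_sqrt (by norm_num)
  have hs0 : 0 ≤ s := Real.sqrt_nonneg 2
  have hs1 : 1 < s := by nlinarith
  have hslt : s < 3/2 := by nlinarith
  set x₀ : ℝ := (s - 1) / 2 with hx0_def
  have hx0pos : 0 < x₀ := by simp only [hx0_def]; linarith
  have hx0lt : x₀ < 1 := by simp only [hx0_def]; linarith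
  have h3x0 : (3 : ℝ) * x₀ ≠ 0 := by positivity
  have hroot : 4 * x₀ ^ 3 - 5 * x₀ + 1 = 0 := by
    simp only [hx0_def]; nlinarith [hs2]
  set g : ℝ → ℝ := fun y => (4 * y ^ 3 - 5 * y + 1) / (3 * y) with hg_def
  set c : ℝ := ((12 * x₀ ^ 2 - 5) * (3 * x₀) - (4 * x₀ ^ 3 - 5 * x₀ + 1) * 3) / (3 * x₀) ^ 2
    with hc_def
  have hnum : 12 * x₀ ^ 2 - 5 < 0 := by simp only [hx0_def]; nlinarith
  have hc_eq : c = (12 * x₀ ^ 2 - 5) / (3 * x₀) := by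
    rw [hc_def, hroot]; field_simp; ring
  have hc : c ≠ 0 := by
    rw [hc_eq]
    exact div_ne_zero (by linarith) h3x0
  have hN : HasStrictDerivAt (fun y : ℝ => 4 * y ^ 3 - 5 * y + 1) (12 * x₀ ^ 2 - 5) x₀ := by
    have h1 := (hasStrictDerivAt_pow 3 x₀).const_mul (4 : ℝ)
    have h2 := (hasStrictDerivAt_id x₀).const_mul (5 : ℝ)
    have := (h1.sub h2).add_const 1
    convert! this using 1 <;> ring
  have hD : HasStrictDerivAt (fun y : ℝ => 3 * y) 3 x₀ := by
    simpa using (hasStrictDerivAt_id x₀).const_mul (3 : ℝ)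
  have hgd : HasStrictDerivAt g c x₀ := by
    rw [hc_def]
    exact hN.div hD h3x0
  have hg0 : g x₀ = 0 := by
    simp only [hg_def, hroot, zero_div]
  have hgan : AnalyticAt ℝ g x₀ := by
    apply AnalyticAt.div
    · exact ((analyticAt_const.mul ((analyticAt_id).pow 3)).sub
        (analyticAt_const.mul analyticAt_id)).add analyticAt_const
    · exact analyticAt_const.mul analyticAt_id
    · exact h3x0
  obtain ⟨p, hp⟩ := hgan
  set i : ℝ ≃L[ℝ] ℝ := ContinuousLinearEquiv.unitsEquivAut ℝ (Units.mk0 c hc) with hi_def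
  have hFD : HasStrictFDerivAt g (i : ℝ →L[ℝ] ℝ) x₀ := hgd.hasStrictFDerivAt_equiv hc
  set F : OpenPartialHomeomorph ℝ ℝ := hFD.toOpenPartialHomeomorph g with hF_def
  have hFcoe : (F : ℝ → ℝ) = g := hFD.toOpenPartialHomeomorph_coe
  have hmem : x₀ ∈ F.source := hFD.mem_toOpenPartialHomeomorph_source
  have hp1 : p 1 = (continuousMultilinearCurryFin1 ℝ ℝ ℝ).symm (i : ℝ →L[ℝ] ℝ) := by
    have hcoeff : (p 1 fun _ => 1) = c :=
      hp.hasDerivAt.unique hgd.hasDerivAt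
    rw [← ContinuousMultilinearMap.mkPiRing_apply_one_eq_self (p 1), hcoeff,
      ← ContinuousMultilinearMap.mkPiRing_apply_one_eq_self
        ((continuousMultilinearCurryFin1 ℝ ℝ ℝ).symm (i : ℝ →L[ℝ] ℝ))]
    congr 1
    simp [hi_def]
  have hpF : HasFPowerSeriesAt (F : ℝ → ℝ) p x₀ := by rw [hFcoe]; exact hp
  have hsymm := F.hasFPowerSeriesAt_symm hmem hpF hp1
  have hFx0 : F x₀ = 0 := by
    show (F : ℝ → ℝ) x₀ = 0
    rw [hFcoe]; exact hg0
  set xf : ℝ → ℝ := ⇑F.symm with hxf_def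
  have hx_an : AnalyticAt ℝ xf 0 := ⟨p.leftInv i x₀, hFx0 ▸ hsymm⟩
  have hxf0 : xf 0 = x₀ := by
    rw [← hFx0]
    exact F.left_inv hmem
  -- strict derivative of xf at 0
  have hloc : hgd.localInverse g c x₀ hc = xf := by
    rw [hxf_def]
    rfl
  have hxd : HasStrictDerivAt xf c⁻¹ 0 := by
    have := hgd.to_localInverse (hf' := hc)
    rw [hloc, hg0] at this
    exact this
  -- eventual properties
  have hev1 : ∀ᶠ δ in nhds 0, AnalyticAt ℝ xf δ := hx_an.eventually_analyticAt
  have hev2 : ∀ᶠ δ in nhds (0 : ℝ), g (xf δ) = δ := by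
    have := hFD.eventually_right_inverse (f := g)
    rw [hg0] at this
    exact this
  have hev3 : ∀ᶠ δ in nhds (0 : ℝ), xf δ ∈ Set.Ioo (0 : ℝ) 1 := by
    apply hx_an.continuousAt.eventually_mem
    rw [hxf0]
    exact isOpen_Ioo.mem_nhds ⟨hx0pos, hx0lt⟩
  have hev := (hev1.and hev2).and hev3
  rw [Metric.eventually_nhds_iff] at hev
  obtain ⟨η, hη, hball⟩ := hev
  have hsub : ∀ δ ∈ Set.Ioo (-η) η,
      (AnalyticAt ℝ xf δ ∧ g (xf δ) = δ) ∧ xf δ ∈ Set.Ioo (0 : ℝ) 1 := by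
    intro δ hδ
    apply hball
    rw [Real.dist_eq, sub_zero, abs_lt]
    exact ⟨hδ.1, hδ.2⟩
  refine ⟨η, hη, xf, ?_, ?_, ?_, ?_, ?_⟩
  · intro δ hδ
    exact ((hsub δ hδ).1).1
  · rw [hxf0]
  · intro δ hδ
    obtain ⟨⟨_, hgx⟩, hx1, hx2⟩ := hsub δ hδ
    refine ⟨?_, hx1, hx2⟩
    have hne : (3 : ℝ) * xf δ ≠ 0 := by positivity
    rw [hg_def] at hgx
    field_simp at hgx
    nlinarith [hgx]
  · rw [hxf0]
  -- the derivative
  · have harc : HasDerivAt Real.arcsin (1 / Real.sqrt (1 - x₀ ^ 2)) x₀ :=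
      Real.hasDerivAt_arcsin (by linarith) (by linarith)
    have harc' : HasDerivAt Real.arcsin (1 / Real.sqrt (1 - x₀ ^ 2)) (xf 0) := by
      rw [hxf0]; exact harc
    have hcomp : HasDerivAt (fun δ => Real.arcsin (xf δ))
        (1 / Real.sqrt (1 - x₀ ^ 2) * c⁻¹) 0 :=
      HasDerivAt.comp 0 harc' hxd.hasDerivAt
    have hfinal := hcomp.const_mul (2 : ℝ)
    convert! hfinal using 1
    have hApos : (0 : ℝ) < Real.sqrt (1 + 2 * s) := Real.sqrt_pos.mpr (by linarith)
    have hA2 : Real.sqrt (1 + 2 * s) ^ 2 = 1 + 2 * s := Real.sq_sqrt (by linarith)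
    have h1x : 1 - x₀ ^ 2 = (1 + 2 * s) / 4 := by
      simp only [hx0_def]; nlinarith
    have hsq : Real.sqrt (1 - x₀ ^ 2) = Real.sqrt (1 + 2 * s) / 2 := by
      rw [h1x, show (1 + 2 * s) / 4 = (Real.sqrt (1 + 2 * s) / 2) ^ 2 by
        rw [div_pow, hA2]; norm_num]
      exact Real.sqrt_sq (by positivity)
    rw [hsq, hc_eq, inv_div]
    have hAne : Real.sqrt (1 + 2 * s) ≠ 0 := ne_of_gt hApos
    have h12 : 12 * x₀ ^ 2 - 5 ≠ 0 := ne_of_lt hnum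
    have h32 : (3 : ℝ) * s - 2 ≠ 0 := by nlinarith
    simp only [hx0_def] at h12 ⊢
    rw [show 12 * ((s - 1) / 2 : ℝ) ^ 2 - 5 = 4 - 6 * s by linear_combination 3 * hs2]
    have h46 : (4 : ℝ) - 6 * s ≠ 0 := by nlinarith
    field_simp
    ring_nf
    rw [show -(s * (4 - s * 6)⁻¹ * 10) + s ^ 2 * (4 - s * 6)⁻¹ * 6 + (4 - s * 6)⁻¹ * 4 = (6 * s ^ 2 - 10 * s + 4) / (4 - s * 6) by ring,
      eq_div_iff (by rw [mul_comm]; exact h46)]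
    ring
end

section
/- Fix C ≥ 1 and β with 4/9 < β < 1/2, and set q = (3β − 1)/15. There exist a ∈ (0, 1) and ε₀ ∈ (0, 1) such that for every ε ∈ (0, ε₀) and all real numbers ω₁, ω₂, Ω₁, Ω₂ satisfying √ε/(C·|ln ε|) ≤ |ω₁| ≤ C·√ε/|ln ε|, 1/C ≤ |ω₂| ≤ C, ε/C ≤ |Ω₁| ≤ C·ε, and ε/(C·|ln ε|) ≤ |Ω₂| ≤ C·ε/|ln ε|, the following hold with γ₀ := a·ε/|ln ε| and K₀ := C·ε^(−q)·|ln ε|^(−3): |Ω₁| ≥ γ₀, |Ω₂| ≥ γ₀, |Ω₁ − Ω₂| ≥ γ₀, and for all integers k₁, k₂, l₁, l₂ with 0 < max(|k₁|, |k₂|) ≤ K₀ and |l₁| + |l₂| ≤ 2, one has |k₁·ω₁ + k₂·ω₂ + l₁·Ω₁ + l₂·Ω₂| ≥ γ₀. -/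
set_option maxHeartbeats 2000000

open Real

theorem stmt7 (C : ℝ) (hC : 1 ≤ C) (β : ℝ) (hβ₁ : 4/9 < β) (hβ₂ : β < 1/2) :
    ∃ a ∈ Set.Ioo (0:ℝ) 1, ∃ ε₀ ∈ Set.Ioo (0:ℝ) 1,
      ∀ ε ∈ Set.Ioo (0:ℝ) ε₀, ∀ ω₁ ω₂ Ω₁ Ω₂ : ℝ,
        Real.sqrt ε / (C * |Real.log ε|) ≤ |ω₁| →
        |ω₁| ≤ C * Real.sqrt ε / |Real.log ε| →
        1 / C ≤ |ω₂| → |ω₂| ≤ C →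
        ε / C ≤ |Ω₁| → |Ω₁| ≤ C * ε →
        ε / (C * |Real.log ε|) ≤ |Ω₂| → |Ω₂| ≤ C * ε / |Real.log ε| →
        a * ε / |Real.log ε| ≤ |Ω₁| ∧
        a * ε / |Real.log ε| ≤ |Ω₂| ∧
        a * ε / |Real.log ε| ≤ |Ω₁ - Ω₂| ∧
        ∀ k₁ k₂ l₁ l₂ : ℤ,
          0 < max |k₁| |k₂| →
          ((max |k₁| |k₂| : ℤ) : ℝ) ≤ C * ε ^ (-((3*β - 1)/15)) / |Real.log ε| ^ 3 →
          |l₁| + |l₂| ≤ 2 →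
          a * ε / |Real.log ε| ≤
            |(k₁ : ℝ) * ω₁ + (k₂ : ℝ) * ω₂ + (l₁ : ℝ) * Ω₁ + (l₂ : ℝ) * Ω₂| := by
  have hC0 : (0:ℝ) < C := lt_of_lt_of_le one_pos hC
  have hC2 : (1:ℝ) ≤ C^2 := by nlinarith [sq_nonneg (C - 1)]
  refine ⟨1/(2*C), ⟨by positivity, by rw [div_lt_one (by positivity)]; linarith⟩,
    min (Real.exp (-(2*C^2)))
      (min ((1/(32*C^2))^4) (min ((1/(3*C^3))^3) (1/(12*C^2)))), ⟨by positivity, ?_⟩, ?_⟩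
  · calc min (Real.exp (-(2*C^2)))
          (min ((1/(32*C^2))^4) (min ((1/(3*C^3))^3) (1/(12*C^2))))
        ≤ Real.exp (-(2*C^2)) := min_le_left _ _
      _ < 1 := Real.exp_lt_one_iff.mpr (neg_lt_zero.mpr (by positivity))
  intro ε hε ω₁ ω₂ Ω₁ Ω₂ hω₁l hω₁u hω₂l hω₂u hΩ₁l hΩ₁u hΩ₂l hΩ₂u
  obtain ⟨hε0, hεlt⟩ := hε
  have hεe : ε < Real.exp (-(2*C^2)) := lt_of_lt_of_le hεlt (min_le_left _ _)
  have hεa : ε < (1/(32*C^2))^4 :=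
    lt_of_lt_of_le hεlt (le_trans (min_le_right _ _) (min_le_left _ _))
  have hεb : ε < (1/(3*C^3))^3 :=
    lt_of_lt_of_le hεlt (le_trans (min_le_right _ _)
      (le_trans (min_le_right _ _) (min_le_left _ _)))
  have hεc : ε < 1/(12*C^2) :=
    lt_of_lt_of_le hεlt (le_trans (min_le_right _ _)
      (le_trans (min_le_right _ _) (min_le_right _ _)))
  have hε1 : ε < 1 := by
    have : 1/(12*C^2) ≤ 1 := by rw [div_le_one (by positivity)]; linarith
    linarith
  obtain ⟨L, hLdef⟩ : ∃ x : ℝ, x = -Real.log ε := ⟨_, rfl⟩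
  have hlog : Real.log ε < 0 := Real.log_neg hε0 hε1
  have hLpos : 0 < L := by rw [hLdef]; linarith
  have habs : |Real.log ε| = L := by rw [hLdef, abs_of_neg hlog]
  have hL2C : 2*C^2 ≤ L := by
    have h1 : Real.log ε < -(2*C^2) := by
      have := Real.log_lt_log hε0 hεe
      rwa [Real.log_exp] at this
    rw [hLdef]; linarith
  have hL1 : 1 ≤ L := by linarith
  -- sqrt facts
  obtain ⟨s, hsdef⟩ : ∃ x : ℝ, x = Real.sqrt (Real.sqrt ε) := ⟨_, rfl⟩
  have hsq : Real.sqrt ε ^ 2 = ε := Real.sq_sqrt hε0.le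
  have hsqnn : 0 < Real.sqrt ε := Real.sqrt_pos.mpr hε0
  have hsq1 : Real.sqrt ε ≤ 1 := Real.sqrt_le_one.mpr hε1.le
  have hs0 : 0 < s := by rw [hsdef]; exact Real.sqrt_pos.mpr hsqnn
  have hs2 : s ^ 2 = Real.sqrt ε := by rw [hsdef]; exact Real.sq_sqrt (Real.sqrt_nonneg _)
  have hsle : s ≤ 1/(32*C^2) := by
    have h1 : Real.sqrt ε ≤ (1/(32*C^2))^2 := by
      have h := Real.sqrt_le_sqrt hεa.le
      rwa [show ((1/(32*C^2))^4) = ((1/(32*C^2))^2)^2 by ring,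
        Real.sqrt_sq (by positivity)] at h
    have h2 := Real.sqrt_le_sqrt h1
    rw [Real.sqrt_sq (by positivity)] at h2
    rw [hsdef]; exact h2
  have hLs : L ≤ 4/s := by
    have h1 : Real.log ε = 4 * Real.log s := by
      have : ε = s ^ 4 := by rw [show s^4 = (s^2)^2 by ring, hs2, hsq]
      rw [this, Real.log_pow]; push_cast; ring
    have h2 : Real.log s⁻¹ ≤ s⁻¹ - 1 := Real.log_le_sub_one_of_pos (by positivity)
    rw [Real.log_inv] at h2
    have : -Real.log s ≤ 1/s := by rw [one_div]; linarith
    simp only [hLdef]; rw [h1]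
    calc -(4 * Real.log s) = 4 * (-Real.log s) := by ring
      _ ≤ 4 * (1/s) := by linarith
      _ = 4/s := by ring
  have hsL : Real.sqrt ε * L ≤ 1/(8*C^2) := by
    have h1 : Real.sqrt ε * L ≤ Real.sqrt ε * (4/s) :=
      mul_le_mul_of_nonneg_left hLs hsqnn.le
    have h2 : Real.sqrt ε * (4/s) = 4*s := by
      rw [← hs2]; field_simp
    rw [h2] at h1
    calc Real.sqrt ε * L ≤ 4*s := h1
      _ ≤ 4*(1/(32*C^2)) := by linarith
      _ = 1/(8*C^2) := by ring
  have hεsq : ε ≤ Real.sqrt ε := by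
    have h := mul_le_mul_of_nonneg_left hsq1 hsqnn.le
    have e : Real.sqrt ε * Real.sqrt ε = ε := Real.mul_self_sqrt hε0.le
    linarith [h, e]
  rw [habs] at hω₁l hω₁u hΩ₂l hΩ₂u ⊢
  have hCL : 0 < C * L := by positivity
  have hω₁l' : Real.sqrt ε ≤ |ω₁| * (C*L) := by
    rwa [div_le_iff₀ hCL] at hω₁l
  have hΩ₁ : |Ω₁| * C ≥ ε := by
    rw [ge_iff_le, ← div_le_iff₀ hC0]; exact hΩ₁l
  refine ⟨?_, ?_, ?_, ?_⟩
  · rw [show 1/(2*C)*ε/L = ε/(2*C*L) from by ring, div_le_iff₀ (by positivity)]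
    have e1 := mul_le_mul_of_nonneg_right hΩ₁l (by positivity : (0:ℝ) ≤ 2*C*L)
    have e2 : ε/C*(2*C*L) = 2*(ε*L) := by field_simp
    rw [e2] at e1
    have e3 : ε*1 ≤ ε*(2*L) := mul_le_mul_of_nonneg_left (by linarith) hε0.le
    linarith
  · rw [show 1/(2*C)*ε/L = ε/(2*C*L) from by ring, div_le_iff₀ (by positivity)]
    have h := mul_le_mul_of_nonneg_right hΩ₂l (by positivity : (0:ℝ) ≤ 2*C*L)
    have e2 : ε/(C*L)*(2*C*L) = 2*ε := by field_simp
    rw [e2] at h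
    linarith
  · rw [show 1/(2*C)*ε/L = ε/(2*C*L) from by ring, div_le_iff₀ (by positivity)]
    have h1 : |Ω₁| - |Ω₂| ≤ |Ω₁ - Ω₂| := abs_sub_abs_le_abs_sub _ _
    have h2 : |Ω₂| * L ≤ C * ε := (le_div_iff₀ hLpos).mp hΩ₂u
    have p1 : ε*(2*C^2) ≤ ε*L := mul_le_mul_of_nonneg_left hL2C hε0.le
    have p2 : |Ω₂| * L * (2*C) ≤ C * ε * (2*C) :=
      mul_le_mul_of_nonneg_right h2 (by positivity)
    have p3 := mul_le_mul_of_nonneg_right hΩ₁l (by positivity : (0:ℝ) ≤ 2*C*L)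
    have e3 : ε/C*(2*C*L) = 2*(ε*L) := by field_simp
    rw [e3] at p3
    have p4 := mul_le_mul_of_nonneg_right h1 (by positivity : (0:ℝ) ≤ 2*C*L)
    have p5 : ε*1 ≤ ε*C^2 := mul_le_mul_of_nonneg_left hC2 hε0.le
    linarith
  · intro k₁ k₂ l₁ l₂ hk hK hl
    rw [show 1/(2*C)*ε/L = ε/(2*C*L) from by ring, div_le_iff₀ (by positivity)]
    -- bounds on l terms
    have hl₁ : |(l₁:ℝ)| ≤ 2 := by
      have h : |l₁| ≤ 2 := le_trans (le_add_of_nonneg_right (abs_nonneg l₂)) hl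
      exact_mod_cast h
    have hl₂ : |(l₂:ℝ)| ≤ 2 := by
      have h : |l₂| ≤ 2 := le_trans (le_add_of_nonneg_left (abs_nonneg l₁)) hl
      exact_mod_cast h
    have hΩ₂u' : |Ω₂| ≤ C * ε := by
      calc |Ω₂| ≤ C * ε / L := hΩ₂u
        _ ≤ C * ε := by
            rw [div_le_iff₀ hLpos]
            have := mul_le_mul_of_nonneg_left hL1 (by positivity : (0:ℝ) ≤ C*ε)
            linarith
    have hlΩ : |(l₁:ℝ) * Ω₁ + (l₂:ℝ) * Ω₂| ≤ 4*C*ε := by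
      calc |(l₁:ℝ) * Ω₁ + (l₂:ℝ) * Ω₂| ≤ |(l₁:ℝ) * Ω₁| + |(l₂:ℝ) * Ω₂| := abs_add_le _ _
        _ = |(l₁:ℝ)| * |Ω₁| + |(l₂:ℝ)| * |Ω₂| := by rw [abs_mul, abs_mul]
        _ ≤ 2 * (C*ε) + 2 * (C*ε) := by
            have p1 : |(l₁:ℝ)| * |Ω₁| ≤ 2 * (C*ε) :=
              mul_le_mul hl₁ hΩ₁u (abs_nonneg _) (by norm_num)
            have p2 : |(l₂:ℝ)| * |Ω₂| ≤ 2 * (C*ε) :=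
              mul_le_mul hl₂ hΩ₂u' (abs_nonneg _) (by norm_num)
            linarith
        _ = 4*C*ε := by ring
    by_cases hk₂ : k₂ = 0
    · -- k₁ ≠ 0 case
      subst hk₂
      have hk₁ : k₁ ≠ 0 := by
        intro h; subst h; simp at hk
      have hk₁1 : (1:ℝ) ≤ |(k₁:ℝ)| := by
        rw [← Int.cast_abs]
        exact_mod_cast Int.one_le_abs hk₁
      simp only [Int.cast_zero, zero_mul, add_zero]
      have htri : |(k₁:ℝ) * ω₁| - |(l₁:ℝ) * Ω₁ + (l₂:ℝ) * Ω₂| ≤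
          |(k₁:ℝ) * ω₁ + (l₁:ℝ) * Ω₁ + (l₂:ℝ) * Ω₂| := by
        have h := abs_sub_abs_le_abs_sub ((k₁:ℝ) * ω₁) (-((l₁:ℝ) * Ω₁ + (l₂:ℝ) * Ω₂))
        rw [abs_neg, sub_neg_eq_add] at h
        have he : (k₁:ℝ) * ω₁ + ((l₁:ℝ) * Ω₁ + (l₂:ℝ) * Ω₂)
            = (k₁:ℝ) * ω₁ + (l₁:ℝ) * Ω₁ + (l₂:ℝ) * Ω₂ := by ring
        rwa [he] at h
      have hk₁ω : |ω₁| ≤ |(k₁:ℝ) * ω₁| := by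
        rw [abs_mul]
        calc |ω₁| = 1 * |ω₁| := (one_mul _).symm
          _ ≤ |(k₁:ℝ)| * |ω₁| := mul_le_mul_of_nonneg_right hk₁1 (abs_nonneg _)
      -- |S| ≥ √ε/(CL) - 4Cε, and ε ≤ that * 2CL
      have hSlb : Real.sqrt ε / (C*L) - 4*C*ε ≤
          |(k₁:ℝ) * ω₁ + (l₁:ℝ) * Ω₁ + (l₂:ℝ) * Ω₂| := by
        have h : Real.sqrt ε / (C*L) ≤ |ω₁| := hω₁l
        linarith
      have key : ε ≤ (Real.sqrt ε / (C*L) - 4*C*ε) * (2*C*L) := by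
        have h8 : 8*C^2*L*ε ≤ Real.sqrt ε := by
          have h := mul_le_mul_of_nonneg_right hsL hsqnn.le
          have h' := mul_le_mul_of_nonneg_left h (by positivity : (0:ℝ) ≤ 8*C^2)
          have e1 : 8*C^2*(Real.sqrt ε * L * Real.sqrt ε) = 8*C^2*L*ε := by
            rw [show (8:ℝ)*C^2*(Real.sqrt ε * L * Real.sqrt ε)
                = 8*C^2*L*(Real.sqrt ε * Real.sqrt ε) by ring,
              Real.mul_self_sqrt hε0.le]
          have e2 : 8*C^2*(1/(8*C^2)*Real.sqrt ε) = Real.sqrt ε := by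
            field_simp
          rw [e1, e2] at h'
          exact h'
        calc ε ≤ Real.sqrt ε := hεsq
          _ ≤ 2 * Real.sqrt ε - 8*C^2*L*ε := by linarith
          _ = (Real.sqrt ε / (C*L) - 4*C*ε) * (2*C*L) := by field_simp; ring
      calc ε ≤ (Real.sqrt ε / (C*L) - 4*C*ε) * (2*C*L) := key
        _ ≤ |(k₁:ℝ) * ω₁ + (l₁:ℝ) * Ω₁ + (l₂:ℝ) * Ω₂| * (2*C*L) :=
            mul_le_mul_of_nonneg_right hSlb (by positivity)
    · -- k₂ ≠ 0 case
      have hk₂1 : (1:ℝ) ≤ |(k₂:ℝ)| := by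
        rw [← Int.cast_abs]
        exact_mod_cast Int.one_le_abs hk₂
      obtain ⟨A, hAdef⟩ : ∃ x : ℝ, x = ε ^ (-((3*β - 1)/15)) := ⟨_, rfl⟩
      rw [← hAdef] at hK
      have hA0 : 0 < A := by rw [hAdef]; exact Real.rpow_pos_of_pos hε0 _
      have hk₁K : |(k₁:ℝ)| ≤ C * A / L^3 := by
        refine le_trans ?_ hK
        rw [← Int.cast_abs]
        exact_mod_cast Int.cast_le.mpr (le_max_left |k₁| |k₂|)
      have hAB : A * Real.sqrt ε ≤ 1/(3*C^3) := by
        have h1 : A * Real.sqrt ε = ε ^ (-((3*β - 1)/15) + 1/2) := by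
          rw [hAdef, Real.sqrt_eq_rpow, ← Real.rpow_add hε0]
        have h2 : ε ^ (-((3*β - 1)/15) + 1/2) ≤ ε ^ ((1:ℝ)/3) :=
          Real.rpow_le_rpow_of_exponent_ge hε0 hε1.le (by norm_num; linarith)
        have h3 : ε ^ ((1:ℝ)/3) ≤ 1/(3*C^3) := by
          have hb : (0:ℝ) < 1/(3*C^3) := by positivity
          have := Real.rpow_le_rpow hε0.le hεb.le (by norm_num : (0:ℝ) ≤ 1/3)
          rwa [← Real.rpow_natCast (1/(3*C^3)) 3, ← Real.rpow_mul hb.le,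
            show ((3:ℕ):ℝ) * (1/3) = 1 by norm_num, Real.rpow_one] at this
        rw [h1]; exact le_trans h2 h3
      have hk₁ω : |(k₁:ℝ) * ω₁| ≤ 1/(3*C) := by
        rw [abs_mul]
        have h1 : |(k₁:ℝ)| * |ω₁| ≤ (C * A / L^3) * (C * Real.sqrt ε / L) :=
          mul_le_mul hk₁K hω₁u (abs_nonneg _) (by positivity)
        have h2 : (C * A / L^3) * (C * Real.sqrt ε / L) = C^2 * (A * Real.sqrt ε) / L^4 := by
          field_simp
        have h3 : C^2 * (A * Real.sqrt ε) / L^4 ≤ C^2 * (1/(3*C^3)) / 1 := by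
          apply div_le_div₀ (by positivity)
            (mul_le_mul_of_nonneg_left hAB (by positivity)) one_pos
            (one_le_pow₀ hL1)
        have h4 : C^2 * (1/(3*C^3)) / 1 = 1/(3*C) := by field_simp
        rw [h2] at h1
        rw [h4] at h3
        linarith
      have hk₂ω : 1/C ≤ |(k₂:ℝ) * ω₂| := by
        rw [abs_mul]
        calc 1/C ≤ |ω₂| := hω₂l
          _ = 1 * |ω₂| := (one_mul _).symm
          _ ≤ |(k₂:ℝ)| * |ω₂| := mul_le_mul_of_nonneg_right hk₂1 (abs_nonneg _)
      set S := (k₁:ℝ) * ω₁ + (k₂:ℝ) * ω₂ + (l₁:ℝ) * Ω₁ + (l₂:ℝ) * Ω₂ with hS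
      have htri : |(k₂:ℝ) * ω₂| - (|(k₁:ℝ) * ω₁| + |(l₁:ℝ) * Ω₁ + (l₂:ℝ) * Ω₂|) ≤ |S| := by
        have h1 := abs_sub_abs_le_abs_sub ((k₂:ℝ) * ω₂)
          (-((k₁:ℝ) * ω₁ + ((l₁:ℝ) * Ω₁ + (l₂:ℝ) * Ω₂)))
        rw [abs_neg, sub_neg_eq_add] at h1
        have h2 : (k₂:ℝ) * ω₂ + ((k₁:ℝ) * ω₁ + ((l₁:ℝ) * Ω₁ + (l₂:ℝ) * Ω₂)) = S := by
          rw [hS]; ring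
        rw [h2] at h1
        have h3 : |(k₁:ℝ) * ω₁ + ((l₁:ℝ) * Ω₁ + (l₂:ℝ) * Ω₂)| ≤
            |(k₁:ℝ) * ω₁| + |(l₁:ℝ) * Ω₁ + (l₂:ℝ) * Ω₂| := abs_add_le _ _
        linarith
      have h4Cε : 4*C*ε ≤ 1/(3*C) := by
        have h12 : ε * (12*C^2) < 1 := by
          rw [← lt_div_iff₀ (by positivity)]; exact hεc
        rw [le_div_iff₀ (by positivity)]
        linarith [h12]
      have hSlb : 1/(3*C) ≤ |S| := by
        have : 1/C - (1/(3*C) + 1/(3*C)) ≤ |S| := by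
          refine le_trans ?_ htri
          gcongr
          linarith
        have heq : 1/C - (1/(3*C) + 1/(3*C)) = 1/(3*C) := by field_simp; ring
        linarith [heq ▸ this]
      calc ε ≤ 1 := hε1.le
        _ ≤ (1/(3*C)) * (2*C*L) := by
            rw [show (1/(3*C)) * (2*C*L) = (2/3) * L by field_simp]
            linarith
        _ ≤ |S| * (2*C*L) := mul_le_mul_of_nonneg_right hSlb (by positivity)
end

section
/- There exists a constant C > 0 such that for all φ ∈ [π/3, π], |1 + F(φ) − (7/24)·(φ − π)²| ≤ C·(φ − π)⁴, where F(φ) = (2/3)·(cos φ − (2 − 2·cos φ)^(−1/2)). -/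
open Real

lemma sin_sub_self_bound {u : ℝ} (hu : |u| ≤ 1) : |Real.sin u - u| ≤ |u| ^ 3 := by
  have h := Real.sin_bound hu
  have h2 : |Real.sin u - u| ≤ |Real.sin u - (u - u^3/6)| + |u^3/6| := by
    have : Real.sin u - u = (Real.sin u - (u - u^3/6)) + (-(u^3/6)) := by ring
    rw [this]
    exact (abs_add_le _ _).trans (by rw [abs_neg])
  have h3 : |u^3/6| = |u|^3/6 := by
    rw [abs_div, abs_pow]; norm_num
  have h4 : |u|^4 ≤ |u|^3 := by
    have := abs_nonneg u
    calc |u|^4 = |u|^3 * |u| := by ring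
    _ ≤ |u|^3 * 1 := by nlinarith [pow_nonneg this 3]
    _ = |u|^3 := by ring
  nlinarith [abs_nonneg u, pow_nonneg (abs_nonneg u) 3]

lemma key_poly (s u c : ℝ) (hchalf : 1/2 ≤ c) (hcle1 : c ≤ 1)
    (hc1 : c = 1 - 2*s^2) (hprod : |s^2 - u^2| ≤ 3*u^4) (hs2 : s^2 ≤ 4*u^2) :
    |(1-c)*(4*c^2+4*c-1) - (7/24)*(4*u)^2*(3*c)| ≤ (4*u)^4*(3*c) := by
  have hinner : (1-c)*(4*c^2+4*c-1) - (7/24)*(4*u)^2*(3*c)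
      = 2*(s^2-u^2)*(4*c^2+4*c-1) - 4*u^2*s^2*(4*c+1) := by
    rw [hc1]; ring
  rw [hinner]
  have hM2 : 4*c^2+4*c-1 ≤ 7 := by nlinarith
  have hM1 : (0:ℝ) ≤ 4*c^2+4*c-1 := by nlinarith
  have hu4 : (0:ℝ) ≤ u^4 := by positivity
  have ht1 : |2*(s^2-u^2)*(4*c^2+4*c-1)| ≤ 42*u^4 := by
    rw [abs_mul, abs_mul, abs_of_nonneg hM1, abs_of_nonneg (by norm_num : (0:ℝ) ≤ 2)]
    calc 2 * |s^2-u^2| * (4*c^2+4*c-1) ≤ 2 * (3*u^4) * 7 := by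
          apply mul_le_mul _ hM2 hM1 (by positivity)
          nlinarith [abs_nonneg (s^2-u^2)]
      _ = 42*u^4 := by ring
  have ht2 : |4*u^2*s^2*(4*c+1)| ≤ 80*u^4 := by
    rw [abs_of_nonneg (by positivity : (0:ℝ) ≤ 4*u^2*s^2*(4*c+1))]
    have h1 : 4*u^2*s^2 ≤ 16*u^4 := by nlinarith [sq_nonneg u]
    have h2 : 4*c+1 ≤ 5 := by linarith
    calc 4*u^2*s^2*(4*c+1) ≤ 16*u^4*5 :=
          mul_le_mul h1 h2 (by positivity) (by positivity)
      _ = 80*u^4 := by ring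
  calc |2*(s^2-u^2)*(4*c^2+4*c-1) - 4*u^2*s^2*(4*c+1)|
      ≤ |2*(s^2-u^2)*(4*c^2+4*c-1)| + |4*u^2*s^2*(4*c+1)| := abs_sub _ _
    _ ≤ 42*u^4 + 80*u^4 := by linarith
    _ ≤ 256*u^4*(3*c) := by nlinarith
    _ = (4*u)^4*(3*c) := by ring

theorem stmt11 :
    ∃ C : ℝ, 0 < C ∧ ∀ φ ∈ Set.Icc (π/3) π,
      |1 + F φ - (7/24) * (φ - π) ^ 2| ≤ C * (φ - π) ^ 4 := by
  refine ⟨1, one_pos, ?_⟩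
  rintro φ ⟨h1, h2⟩
  have hπ4 : π ≤ 4 := by linarith [Real.pi_le_four]
  set x : ℝ := φ - π with hxdef
  have hx0 : x ≤ 0 := by simp [hxdef]; linarith
  have hxge : -(2*π/3) ≤ x := by simp [hxdef]; linarith
  set u : ℝ := x/4 with hudef
  have huabs : |u| ≤ 1 := by
    rw [abs_le]; constructor <;> [skip; skip] <;> simp [hudef] <;> linarith
  set s : ℝ := Real.sin u with hsdef
  set c : ℝ := Real.cos (x/2) with hcdef
  -- c = 1 - 2 s^2
  have hc1 : c = 1 - 2*s^2 := by
    have hx2 : x/2 = 2*(x/4) := by ring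
    rw [hcdef, hx2, Real.cos_two_mul']
    have := Real.sin_sq_add_cos_sq (x/4)
    rw [hsdef, hudef]
    nlinarith [Real.sin_sq_add_cos_sq (x/4)]
  -- c ≥ 1/2
  have hchalf : 1/2 ≤ c := by
    rw [hcdef]
    have h1 : Real.cos (π/3) ≤ Real.cos (-(x/2)) := by
      apply Real.cos_le_cos_of_nonneg_of_le_pi
      · linarith
      · linarith [Real.pi_pos]
      · linarith
    rw [Real.cos_neg, Real.cos_pi_div_three] at h1
    linarith
  have hcle1 : c ≤ 1 := Real.cos_le_one _
  -- cos φ = 1 - 2 c^2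
  have hcosφ : Real.cos φ = 1 - 2*c^2 := by
    have hφ : φ = x + π := by rw [hxdef]; ring
    rw [hφ, Real.cos_add_pi]
    have hx2 : x = 2*(x/2) := by ring
    rw [hx2, Real.cos_two_mul, ← hcdef]
    ring_nf
  have h2c : 2 - 2*Real.cos φ = (2*c)^2 := by rw [hcosφ]; ring
  have hrpow : (2 - 2*Real.cos φ) ^ (-(1:ℝ)/2) = (2*c)⁻¹ := by
    rw [h2c, show (-(1:ℝ)/2) = -(1/2 : ℝ) by ring,
      Real.rpow_neg (by positivity), ← Real.sqrt_eq_rpow,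
      Real.sqrt_sq (by linarith)]
  have hcne : (3*c) ≠ 0 := by positivity
  have hF : 1 + F φ = (1-c)*(4*c^2+4*c-1)/(3*c) := by
    rw [F, hrpow, hcosφ]
    field_simp
    ring
  -- estimates
  have hsu : |s - u| ≤ |u|^3 := sin_sub_self_bound huabs
  have hu3 : |u|^3 ≤ |u| := by
    have := pow_le_pow_of_le_one (abs_nonneg u) huabs (by norm_num : 1 ≤ 3)
    simpa using this
  have hsabs : |s| ≤ 2*|u| := by
    have : |s| ≤ |s - u| + |u| := by
      calc |s| = |(s-u) + u| := by ring_nf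
      _ ≤ |s-u| + |u| := abs_add_le _ _
    linarith
  have hsum : |s + u| ≤ 3*|u| := by
    have : |s + u| ≤ |s| + |u| := abs_add_le _ _
    linarith
  have hprod : |s^2 - u^2| ≤ 3*u^4 := by
    have h := mul_le_mul hsu hsum (abs_nonneg _) (by positivity)
    calc |s^2 - u^2| = |s-u| * |s+u| := by rw [← abs_mul]; ring_nf
    _ ≤ |u|^3 * (3*|u|) := h
    _ = 3*|u|^4 := by ring
    _ = 3*u^4 := by rw [← abs_pow, abs_of_nonneg (by positivity : (0:ℝ) ≤ u^4)]
  have hs2 : s^2 ≤ 4*u^2 := by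
    nlinarith [mul_le_mul hsabs hsabs (abs_nonneg s) (by positivity : (0:ℝ) ≤ 2*|u|),
      sq_abs s, sq_abs u]
  have key : |(1-c)*(4*c^2+4*c-1) - (7/24)*x^2*(3*c)| ≤ x^4*(3*c) := by
    have hx4 : x = 4*u := by rw [hudef]; ring
    rw [hx4]
    exact key_poly s u c hchalf hcle1 hc1 hprod hs2
  have h3cpos : (0:ℝ) < 3*c := by positivity
  have heq : (1-c)*(4*c^2+4*c-1)/(3*c) - (7/24)*x^2
      = ((1-c)*(4*c^2+4*c-1) - (7/24)*x^2*(3*c))/(3*c) := by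
    field_simp
  rw [hF, heq, one_mul, abs_div, abs_of_pos h3cpos, div_le_iff₀ h3cpos]
  exact key
end

section
/- There exist constants c > 0 and C > 0 such that for every δ ≥ 0 and every φ ∈ [π/3, π], c·(δ + (φ − π)²) ≤ 1 + δ + F(φ) ≤ C·(δ + (φ − π)²), where F(φ) = (2/3)·(cos φ − (2 − 2·cos φ)^(−1/2)). -/
open Real

set_option maxHeartbeats 1000000 in
theorem stmt12 :
    ∃ c : ℝ, 0 < c ∧ ∃ C : ℝ, 0 < C ∧
      ∀ δ : ℝ, 0 ≤ δ → ∀ φ ∈ Set.Icc (π/3) π,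
        c * (δ + (φ - π) ^ 2) ≤ 1 + δ + F φ ∧
        1 + δ + F φ ≤ C * (δ + (φ - π) ^ 2) := by
  refine ⟨1/30, by norm_num, 1, by norm_num, ?_⟩
  intro δ hδ φ hφ
  obtain ⟨h1, h2⟩ := hφ
  have hπ := Real.pi_pos
  have hπ315 : π < 3.15 := Real.pi_lt_d2
  have hp2 : (0:ℝ) < π ^ 2 := by positivity
  obtain ⟨x, hxdef⟩ : ∃ x, x = π - φ := ⟨_, rfl⟩
  have hx0 : 0 ≤ x := by rw [hxdef]; linarith
  have hxπ : x ≤ π := by rw [hxdef]; linarith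
  have hcosx : Real.cos x = - Real.cos φ := by
    rw [hxdef]; exact Real.cos_pi_sub φ
  have hc1 : Real.cos φ ≤ 1 := Real.cos_le_one φ
  have hcm1 : -1 ≤ Real.cos φ := Real.neg_one_le_cos φ
  have hs0 : (0:ℝ) ≤ 2 - 2 * Real.cos φ := by linarith
  obtain ⟨s, hsdef⟩ : ∃ s, s = Real.sqrt (2 - 2 * Real.cos φ) := ⟨_, rfl⟩
  have hsnn : 0 ≤ s := hsdef ▸ Real.sqrt_nonneg _
  have hs2 : s ^ 2 = 2 - 2 * Real.cos φ := hsdef ▸ Real.sq_sqrt hs0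
  have hchalf : Real.cos φ ≤ 1 / 2 := by
    have := Real.cos_le_cos_of_nonneg_of_le_pi (by positivity) h2 h1
    rw [Real.cos_pi_div_three] at this
    linarith
  have hs1 : 1 ≤ s := by nlinarith
  have hsle2 : s ≤ 2 := by nlinarith
  have hspos : 0 < s := by linarith
  have hrpow : (2 - 2 * Real.cos φ) ^ (-(1:ℝ)/2) = s⁻¹ := by
    rw [show (-(1:ℝ)/2) = -(1/2) by ring, Real.rpow_neg hs0,
      ← Real.sqrt_eq_rpow, hsdef]
  have hcoseq : Real.cos φ = 1 - s ^ 2 / 2 := by linarith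
  have hF : 1 + F φ = (2 - s) * (s ^ 2 + 2 * s - 1) / (3 * s) := by
    rw [F, hrpow, hcoseq]
    field_simp
    ring
  have hprod : (2 - s) * (2 + s) = 2 * (1 - Real.cos x) := by
    nlinarith [hs2, hcosx]
  have hub : 1 - Real.cos x ≤ x ^ 2 / 2 := by
    have := Real.one_sub_sq_div_two_le_cos (x := x)
    linarith
  have hlb : 2 * x ^ 2 ≤ π ^ 2 * (1 - Real.cos x) := by
    have h := Real.cos_le_one_sub_mul_cos_sq (x := x) (by rwa [abs_of_nonneg hx0])
    calc 2 * x ^ 2 = π ^ 2 * (2 / π ^ 2 * x ^ 2) := by field_simp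
      _ ≤ π ^ 2 * (1 - Real.cos x) := by
          apply mul_le_mul_of_nonneg_left _ hp2.le
          linarith
  have h2snn : 0 ≤ 2 - s := by linarith
  have h2sub : x ^ 2 ≤ π ^ 2 * (2 - s) := by
    have e1 : 4 * x ^ 2 ≤ π ^ 2 * ((2 - s) * (2 + s)) := by
      rw [hprod]; linarith
    have e2 : π ^ 2 * ((2 - s) * (2 + s)) ≤ π ^ 2 * ((2 - s) * 4) := by
      apply mul_le_mul_of_nonneg_left _ hp2.le
      nlinarith
    linarith
  have h2sub' : 3 * (2 - s) ≤ x ^ 2 := by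
    nlinarith [hub, hprod, hsle2, hs1]
  have hπ2le : π ^ 2 ≤ 10 := by nlinarith
  have hx2le : x ^ 2 ≤ 10 * (2 - s) := by
    have := mul_nonneg (by linarith : (0:ℝ) ≤ 10 - π ^ 2) h2snn
    nlinarith
  have hGlb : x ^ 2 / 30 ≤ 1 + F φ := by
    rw [hF, le_div_iff₀ (by linarith)]
    nlinarith [hx2le, hs1, hsle2, hspos, mul_nonneg (sub_nonneg.2 hsle2) (sub_nonneg.2 hs1)]
  have hGub : 1 + F φ ≤ x ^ 2 := by
    rw [hF, div_le_iff₀ (by linarith)]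
    nlinarith [h2sub', hs1, hsle2, hspos, sub_nonneg.2 hsle2]
  have hx2 : (φ - π) ^ 2 = x ^ 2 := by rw [hxdef]; ring
  constructor
  · rw [hx2]; linarith
  · rw [hx2]; linarith
end

section
/- With φ₀ = 2·arcsin((√2 − 1)/2), one has 2π − 2·φ₀ > (312/180)·π; that is, the amplitude of oscillation of the angular separation along any horseshoe orbit, which is at least 2π − 2·φ₀, exceeds 312 degrees. -/
open Real

theorem stmt15 :
    (312/180) * π < 2 * π - 2 * (2 * Real.arcsin ((Real.sqrt 2 - 1) / 2)) := by
  have hpi1 := Real.pi_gt_d6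
  have hpi2 := Real.pi_lt_d6
  have hs : Real.sqrt 2 < 1.4142136 := by
    rw [show (1.4142136 : ℝ) = Real.sqrt (1.4142136 ^ 2) by
      rw [Real.sqrt_sq]; norm_num]
    apply Real.sqrt_lt_sqrt <;> norm_num
  have hsin : (Real.sqrt 2 - 1) / 2 < Real.sin (π / 15) := by
    have h1 : π / 15 - (π / 15) ^ 3 / 4 < Real.sin (π / 15) := by
      nlinarith [Real.sin_gt_sub_cube (x := π / 15) (by positivity), pow_pos (show (0:ℝ) < π / 15 by positivity) 3]
    have hc : (π/15)^3 < (3.141593/15)^3 := by gcongr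
    nlinarith [hc]
  have harc : Real.arcsin ((Real.sqrt 2 - 1) / 2) < π / 15 := by
    rw [Real.arcsin_lt_iff_lt_sin' ⟨by nlinarith, by nlinarith⟩]
    exact hsin
  linarith
end
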